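/- The dark-pool term is nonexpanding (derivative bound in the proof of Lemma 3.7): for all real a > 0 and β > 0, the function h : ℝ → ℝ defined by h(w) = a·w/(a^β + |w|^β)^{1/β} − w is 1-Lipschitz, i.e. |h(w₁) − h(w₂)| ≤ |w₁ − w₂| for all w₁, w₂ ∈ ℝ. -/

import Mathlib

/-- The dark-pool map `g(w) = a·w/(a^β + |w|^β)^{1/β}`. -/
noncomputable def dpFun (a β : ℝ) : ℝ → ℝ :=
  fun w => a * w / ((a ^ β + |w| ^ β) ^ (1 / β))

lemma dp_s_pos {a β : ℝ} (ha : 0 < a) (w : ℝ) : 0 < a ^ β + |w| ^ β :=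
  add_pos_of_pos_of_nonneg (Real.rpow_pos_of_pos ha β)
    (Real.rpow_nonneg (abs_nonneg w) β)

lemma dp_denom_pos {a β : ℝ} (ha : 0 < a) (w : ℝ) :
    0 < (a ^ β + |w| ^ β) ^ (1 / β) :=
  Real.rpow_pos_of_pos (dp_s_pos ha w) _

lemma dp_cont {a β : ℝ} (ha : 0 < a) (hβ : 0 < β) : Continuous (dpFun a β) := by
  apply Continuous.div (continuous_const.mul continuous_id)
  · apply Continuous.rpow_const
    · exact continuous_const.add (continuous_abs.rpow_const fun x => Or.inr hβ.le)
    · intro x; exact Or.inl (dp_s_pos ha x).ne'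
  · intro x; exact (dp_denom_pos ha x).ne'

/-- Derivative of `dpFun` at positive points. -/
lemma dp_hasDerivAt {a β : ℝ} (ha : 0 < a) (hβ : 0 < β) {w : ℝ} (hw : 0 < w) :
    HasDerivAt (dpFun a β)
      ((a * (a ^ β + w ^ β) ^ (1 / β) -
          a * w * ((1 / β) * (a ^ β + w ^ β) ^ (1 / β - 1) * (β * w ^ (β - 1)))) /
        ((a ^ β + w ^ β) ^ (1 / β)) ^ 2) w := by
  have hs : 0 < a ^ β + w ^ β := by
    have := dp_s_pos (β := β) ha w
    rwa [abs_of_pos hw] at this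
  have d1 : HasDerivAt (fun x : ℝ => a ^ β + x ^ β) (β * w ^ (β - 1)) w :=
    (Real.hasDerivAt_rpow_const (Or.inl hw.ne')).const_add _
  have d3 : HasDerivAt (fun t : ℝ => t ^ (1 / β))
      ((1 / β) * (a ^ β + w ^ β) ^ (1 / β - 1)) (a ^ β + w ^ β) :=
    Real.hasDerivAt_rpow_const (Or.inl hs.ne')
  have d4 : HasDerivAt (fun x : ℝ => (a ^ β + x ^ β) ^ (1 / β))
      ((1 / β) * (a ^ β + w ^ β) ^ (1 / β - 1) * (β * w ^ (β - 1))) w := by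
    have := d3.comp w d1; exact this
  have d5 : HasDerivAt (fun x : ℝ => a * x) a w := by
    simpa using (hasDerivAt_id w).const_mul a
  have d6 := d5.div d4 (by positivity : (a ^ β + w ^ β) ^ (1 / β) ≠ 0)
  refine d6.congr_of_eventuallyEq ?_
  filter_upwards [eventually_gt_nhds hw] with x hx
  simp [dpFun, abs_of_pos hx]

/-- The derivative value simplifies to `a^(1+β) · s^(1/β - 1) / s^(2/β)` form. -/
lemma dp_deriv_num {a β : ℝ} (ha : 0 < a) (hβ : 0 < β) {w : ℝ} (hw : 0 < w) :
    a * (a ^ β + w ^ β) ^ (1 / β) -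
        a * w * ((1 / β) * (a ^ β + w ^ β) ^ (1 / β - 1) * (β * w ^ (β - 1)))
      = a * a ^ β * (a ^ β + w ^ β) ^ (1 / β - 1) := by
  have hs : 0 < a ^ β + w ^ β := by
    positivity
  have hww : w ^ β = w * w ^ (β - 1) := by
    rw [show β = 1 + (β - 1) by ring, Real.rpow_add hw, Real.rpow_one]
    ring_nf
  have hss : (a ^ β + w ^ β) ^ (1 / β) = (a ^ β + w ^ β) ^ (1 / β - 1) * (a ^ β + w ^ β) := by
    rw [← Real.rpow_add_one hs.ne' (1 / β - 1)]
    congr 1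
    ring
  rw [hss, hww]
  have hβ' : (β : ℝ) ≠ 0 := hβ.ne'
  field_simp
  ring

lemma dp_deriv_pos {a β : ℝ} (ha : 0 < a) (hβ : 0 < β) {w : ℝ} (hw : 0 < w) :
    0 < ((a * (a ^ β + w ^ β) ^ (1 / β) -
          a * w * ((1 / β) * (a ^ β + w ^ β) ^ (1 / β - 1) * (β * w ^ (β - 1)))) /
        ((a ^ β + w ^ β) ^ (1 / β)) ^ 2) := by
  rw [dp_deriv_num ha hβ hw]
  have hs : 0 < a ^ β + w ^ β := by positivity
  positivity

lemma dp_deriv_lt_one {a β : ℝ} (ha : 0 < a) (hβ : 0 < β) {w : ℝ} (hw : 0 < w) :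
    ((a * (a ^ β + w ^ β) ^ (1 / β) -
          a * w * ((1 / β) * (a ^ β + w ^ β) ^ (1 / β - 1) * (β * w ^ (β - 1)))) /
        ((a ^ β + w ^ β) ^ (1 / β)) ^ 2) < 1 := by
  rw [dp_deriv_num ha hβ hw]
  have hs : 0 < a ^ β + w ^ β := by positivity
  rw [div_lt_one (by positivity)]
  have hsq : ((a ^ β + w ^ β) ^ (1 / β)) ^ 2
      = (a ^ β + w ^ β) ^ (1 / β - 1) * (a ^ β + w ^ β) ^ (1 / β + 1) := by
    rw [sq, ← Real.rpow_add hs, ← Real.rpow_add hs]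
    congr 1
    ring
  rw [hsq]
  have key : a * a ^ β < (a ^ β + w ^ β) ^ (1 / β + 1) := by
    have h1 : a * a ^ β = a ^ (1 + β) := by
      rw [Real.rpow_add ha, Real.rpow_one]
    have h2 : a ^ (1 + β) = (a ^ β) ^ ((1 + β) / β) := by
      rw [← Real.rpow_mul ha.le]
      congr 1
      field_simp
    have h3 : (a ^ β) ^ ((1 + β) / β) < (a ^ β + w ^ β) ^ ((1 + β) / β) := by
      apply Real.rpow_lt_rpow (by positivity)
      · have : 0 < w ^ β := Real.rpow_pos_of_pos hw β
        linarith
      · positivity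
    have h4 : (a ^ β + w ^ β) ^ ((1 + β) / β) = (a ^ β + w ^ β) ^ (1 / β + 1) := by
      congr 1
      field_simp
    rw [h1, h2, ← h4]
    exact h3
  have hpos : 0 < (a ^ β + w ^ β) ^ (1 / β - 1) := Real.rpow_pos_of_pos hs _
  calc a * a ^ β * (a ^ β + w ^ β) ^ (1 / β - 1)
      < (a ^ β + w ^ β) ^ (1 / β + 1) * (a ^ β + w ^ β) ^ (1 / β - 1) :=
        mul_lt_mul_of_pos_right key hpos
    _ = (a ^ β + w ^ β) ^ (1 / β - 1) * (a ^ β + w ^ β) ^ (1 / β + 1) := by ring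

/-- odd + monotone on `[0,∞)` implies monotone. -/
lemma odd_monotone {F : ℝ → ℝ} (hodd : ∀ w, F (-w) = -F w)
    (hm : MonotoneOn F (Set.Ici (0 : ℝ))) : Monotone F := by
  have h0 : F 0 = 0 := by have := hodd 0; simp only [neg_zero] at this; linarith
  have hnonneg : ∀ w, 0 ≤ w → 0 ≤ F w := by
    intro w hw
    have := hm (Set.mem_Ici.mpr le_rfl) (Set.mem_Ici.mpr hw) hw
    rw [h0] at this; exact this
  intro x y hxy
  rcases le_total 0 x with hx | hx
  · exact hm (Set.mem_Ici.mpr hx) (Set.mem_Ici.mpr (hx.trans hxy)) hxy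
  · rcases le_total 0 y with hy | hy
    · have h1 : 0 ≤ F (-x) := hnonneg _ (by linarith)
      have h2 := hodd (-x); rw [neg_neg] at h2
      have h3 := hnonneg y hy
      linarith
    · have h1 : F (-y) ≤ F (-x) :=
        hm (Set.mem_Ici.mpr (by linarith)) (Set.mem_Ici.mpr (by linarith)) (by linarith)
      have hx2 := hodd (-x); rw [neg_neg] at hx2
      have hy2 := hodd (-y); rw [neg_neg] at hy2
      linarith

lemma dp_monotone {a β : ℝ} (ha : 0 < a) (hβ : 0 < β) : Monotone (dpFun a β) := by
  apply odd_monotone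
  · intro w
    simp [dpFun, abs_neg, neg_div]
  · apply StrictMonoOn.monotoneOn
    apply strictMonoOn_of_deriv_pos (convex_Ici 0) (dp_cont ha hβ).continuousOn
    intro x hx
    rw [interior_Ici] at hx
    rw [(dp_hasDerivAt ha hβ hx).deriv]
    exact dp_deriv_pos ha hβ hx

lemma dp_sub_monotone {a β : ℝ} (ha : 0 < a) (hβ : 0 < β) :
    Monotone (fun w => w - dpFun a β w) := by
  apply odd_monotone
  · intro w
    have h : dpFun a β (-w) = -dpFun a β w := by
      simp [dpFun, abs_neg, neg_div]
    rw [h]; ring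
  · apply StrictMonoOn.monotoneOn
    have hc : Continuous (fun w => w - dpFun a β w) := continuous_id.sub (dp_cont ha hβ)
    apply strictMonoOn_of_deriv_pos (convex_Ici 0) hc.continuousOn
    intro x hx
    rw [interior_Ici] at hx
    have hd : HasDerivAt (fun w => w - dpFun a β w)
        (1 - ((a * (a ^ β + x ^ β) ^ (1 / β) -
          a * x * ((1 / β) * (a ^ β + x ^ β) ^ (1 / β - 1) * (β * x ^ (β - 1)))) /
        ((a ^ β + x ^ β) ^ (1 / β)) ^ 2)) x := by
      exact (hasDerivAt_id' x).sub (dp_hasDerivAt ha hβ hx)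
    rw [hd.deriv]
    have := dp_deriv_lt_one ha hβ hx
    linarith

/-- the dark-pool term is nonexpanding: for `a > 0` and `β > 0`, the
function `h(w) = a·w/(a^β + |w|^β)^{1/β} − w` is 1-Lipschitz. -/
theorem dark_pool_term_nonexpanding (a β : ℝ) (ha : 0 < a) (hβ : 0 < β) :
    ∀ w₁ w₂ : ℝ,
      |(a * w₁ / ((a ^ β + |w₁| ^ β) ^ (1 / β)) - w₁)
          - (a * w₂ / ((a ^ β + |w₂| ^ β) ^ (1 / β)) - w₂)|
        ≤ |w₁ - w₂| := by
  have key : ∀ w₁ w₂ : ℝ, w₂ ≤ w₁ →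
      |(a * w₁ / ((a ^ β + |w₁| ^ β) ^ (1 / β)) - w₁)
          - (a * w₂ / ((a ^ β + |w₂| ^ β) ^ (1 / β)) - w₂)| ≤ |w₁ - w₂| := by
    intro w₁ w₂ h12
    have hg : dpFun a β w₂ ≤ dpFun a β w₁ := dp_monotone ha hβ h12
    have hs : w₂ - dpFun a β w₂ ≤ w₁ - dpFun a β w₁ := dp_sub_monotone ha hβ h12
    have e1 : a * w₁ / ((a ^ β + |w₁| ^ β) ^ (1 / β)) = dpFun a β w₁ := rfl
    have e2 : a * w₂ / ((a ^ β + |w₂| ^ β) ^ (1 / β)) = dpFun a β w₂ := rfl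
    rw [e1, e2, abs_of_nonneg (by linarith : (0:ℝ) ≤ w₁ - w₂), abs_le]
    constructor <;> linarith
  intro w₁ w₂
  rcases le_total w₂ w₁ with h | h
  · exact key w₁ w₂ h
  · rw [abs_sub_comm, abs_sub_comm w₁ w₂]
    exact key w₂ w₁ h
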